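/- Two binary strings that are reverses of each other have the same autocorrelation polynomial, and hence the same expected wait time. -/

import Mathlib

/-- Extend a finite binary string (`true` = heads, `false` = tails) to an
infinite sequence by padding with `false`. -/
def padFalse {i : ℕ} (v : Fin i → Bool) : ℕ → Bool :=
  fun n => if h : n < i then v ⟨n, h⟩ else false

/-- The pattern `w` occurs in the flip sequence `s` (flip `m` is `s (m-1)`)
as a consecutive substring ending at flip `m`. -/
def OccursEndingAt (w : List Bool) (s : ℕ → Bool) (m : ℕ) : Prop :=
  w.length ≤ m ∧ ∀ j : Fin w.length, s (m - w.length + (j : ℕ)) = w.get j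

/-- The first occurrence of `w` in `s` ends exactly at flip `m`. -/
def FirstOccurEndsAt (w : List Bool) (s : ℕ → Bool) (m : ℕ) : Prop :=
  OccursEndingAt w s m ∧ ∀ k < m, ¬ OccursEndingAt w s k

/-- The number of binary strings of length `i` that end with `w` and contain
no other occurrence of `w` (`w`-first-timers of length `i`). -/
noncomputable def firstTimerCount (w : List Bool) (i : ℕ) : ℕ :=
  Nat.card {v : Fin i → Bool // FirstOccurEndsAt w (padFalse v) i}

/-- The probability that `w` first appears at exactly the `i`-th fair coin flip. -/
noncomputable def firstTimeProb (w : List Bool) (i : ℕ) : ℝ :=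
  (firstTimerCount w i : ℝ) / 2 ^ i

/-- The expected number of fair coin flips until `w` first appears. -/
noncomputable def expectedWaitTime (w : List Bool) : ℝ :=
  ∑' i : ℕ, (i : ℝ) * firstTimeProb w i

/-- The autocorrelation polynomial of `w`, evaluated at `z`:
`c_w(z) = ∑ c_i z^i`, where `c_i = 1` iff the suffix of `w` of length `n - i`
equals the prefix of `w` of length `n - i`. -/
noncomputable def autocorrPoly (w : List Bool) (z : ℝ) : ℝ :=
  ∑ i ∈ Finset.range w.length,
    if List.drop i w = List.take (w.length - i) w then z ^ i else 0

section Aux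

open Finset

/-! ### Basic congruence lemmas -/

theorem occurs_congr' {w : List Bool} {s t : ℕ → Bool} {k : ℕ}
    (h : ∀ x < k, s x = t x) :
    OccursEndingAt w s k ↔ OccursEndingAt w t k := by
  unfold OccursEndingAt
  constructor <;> rintro ⟨hl, hv⟩ <;> refine ⟨hl, fun j => ?_⟩
  · have hj := j.isLt
    rw [← h _ (by omega), hv]
  · have hj := j.isLt
    rw [h _ (by omega), hv]

theorem firstOccur_congr' {w : List Bool} {s t : ℕ → Bool} {m : ℕ}
    (h : ∀ x < m, s x = t x) :
    FirstOccurEndsAt w s m ↔ FirstOccurEndsAt w t m := by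
  unfold FirstOccurEndsAt
  refine and_congr (occurs_congr' h) (forall_congr' fun k => forall_congr' fun hk => ?_)
  exact not_congr (occurs_congr' fun x hx => h x (hx.trans hk))

theorem occurs_shift' {w : List Bool} {s t : ℕ → Bool} {d k : ℕ} (hk : w.length ≤ k)
    (h : ∀ x, t x = s (d + x)) :
    OccursEndingAt w t k ↔ OccursEndingAt w s (d + k) := by
  unfold OccursEndingAt
  constructor <;> rintro ⟨hl, hv⟩
  · refine ⟨by omega, fun j => ?_⟩
    have hj := j.isLt
    rw [show d + k - w.length + (j : ℕ) = d + (k - w.length + (j : ℕ)) by omega, ← h, hv]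
  · refine ⟨hk, fun j => ?_⟩
    have hj := j.isLt
    rw [h, show d + (k - w.length + (j : ℕ)) = d + k - w.length + (j : ℕ) by omega, hv]

/-! ### Definitions for the "last occurrence" decomposition -/

/-- `w` occurs at the very start of `s`, and no other occurrence of `w`
ends at a position `≤ m`. -/
def LastAtStart (w : List Bool) (m : ℕ) (s : ℕ → Bool) : Prop :=
  w.length ≤ m ∧ OccursEndingAt w s w.length ∧
    ∀ k ≤ m, OccursEndingAt w s k → k = w.length

noncomputable def lastTimerCount (w : List Bool) (m : ℕ) : ℕ :=
  Nat.card {v : Fin m → Bool // LastAtStart w m (padFalse v)}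

def MaxOccurEndsAt (w : List Bool) (i : ℕ) (s : ℕ → Bool) (k : ℕ) : Prop :=
  OccursEndingAt w s k ∧ ∀ k' ≤ i, OccursEndingAt w s k' → k' ≤ k

/-! ### Splitting equivalences -/

/-- Split a string of length `i` at position `d ≤ i`. -/
def splitEquiv (d i : ℕ) (hd : d ≤ i) :
    (Fin i → Bool) ≃ (Fin d → Bool) × (Fin (i - d) → Bool) where
  toFun v := (fun x => v ⟨x, lt_of_lt_of_le x.isLt hd⟩,
              fun x => v ⟨d + x, by have := x.isLt; omega⟩)
  invFun p := fun x => if h : (x : ℕ) < d then p.1 ⟨x, h⟩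
    else p.2 ⟨(x : ℕ) - d, by have := x.isLt; omega⟩
  left_inv v := by
    funext x
    dsimp only
    by_cases h : (x : ℕ) < d
    · rw [dif_pos h]
    · rw [dif_neg h]
      congr 1
      exact Fin.ext (by simp; omega)
  right_inv p := by
    obtain ⟨p1, p2⟩ := p
    refine Prod.ext ?_ ?_ <;> funext x <;> have hx := x.isLt <;> simp only [Fin.val_mk]
    · rw [dif_pos hx]
    · rw [dif_neg (show ¬ d + (x : ℕ) < d by omega)]
      congr 1
      exact Fin.ext (by simp)

def prodSubtypeFst {α β : Type*} (P : α → Prop) :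
    {p : α × β // P p.1} ≃ {a : α // P a} × β where
  toFun x := (⟨x.1.1, x.2⟩, x.1.2)
  invFun x := ⟨(x.1.1, x.2), x.1.2⟩
  left_inv _ := rfl
  right_inv _ := rfl

def prodSubtypeSnd {α β : Type*} (P : β → Prop) :
    {p : α × β // P p.2} ≃ α × {b : β // P b} where
  toFun x := (x.1.1, ⟨x.1.2, x.2⟩)
  invFun x := ⟨(x.1, x.2.1), x.2.2⟩
  left_inv _ := rfl
  right_inv _ := rfl

theorem nat_card_sigma {n : ℕ} (T : Fin n → Type*) [∀ k, Finite (T k)] :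
    Nat.card ((k : Fin n) × T k) = ∑ k : Fin n, Nat.card (T k) := by
  letI : ∀ k, Fintype (T k) := fun k => Fintype.ofFinite (T k)
  simp [Nat.card_eq_fintype_card, Fintype.card_sigma]

theorem nat_card_fun_bool (j : ℕ) : Nat.card (Fin j → Bool) = 2 ^ j := by
  simp [Nat.card_eq_fintype_card]

/-! ### padFalse lemmas -/

theorem padFalse_restrict {i d : ℕ} (hd : d ≤ i) (v : Fin i → Bool) :
    ∀ x < d, padFalse v x = padFalse (((splitEquiv d i hd) v).1) x := by
  intro x hx
  simp only [padFalse, splitEquiv, Equiv.coe_fn_mk]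
  rw [dif_pos hx, dif_pos (lt_of_lt_of_le hx hd)]

theorem padFalse_shift {i d : ℕ} (hd : d ≤ i) (v : Fin i → Bool) :
    ∀ x, padFalse (((splitEquiv d i hd) v).2) x = padFalse v (d + x) := by
  intro x
  simp only [padFalse, splitEquiv, Equiv.coe_fn_mk]
  by_cases h : x < i - d
  · rw [dif_pos h, dif_pos (by omega)]
  · rw [dif_neg h, dif_neg (by omega)]

/-! ### Counting pieces -/

theorem card_first_piece (w : List Bool) {m i : ℕ} (hm : m ≤ i) :
    Nat.card {v : Fin i → Bool // FirstOccurEndsAt w (padFalse v) m}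
      = firstTimerCount w m * 2 ^ (i - m) := by
  have e1 : {v : Fin i → Bool // FirstOccurEndsAt w (padFalse v) m}
      ≃ {p : (Fin m → Bool) × (Fin (i - m) → Bool) // FirstOccurEndsAt w (padFalse p.1) m} :=
    (splitEquiv m i hm).subtypeEquiv fun v =>
      firstOccur_congr' (padFalse_restrict hm v)
  rw [Nat.card_congr (e1.trans (prodSubtypeFst
      (fun v1 => FirstOccurEndsAt w (padFalse v1) m))), Nat.card_prod, nat_card_fun_bool,
    firstTimerCount]

theorem card_max_piece (w : List Bool) {k i : ℕ} (hn : w.length ≤ k) (hk : k ≤ i) :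
    Nat.card {v : Fin i → Bool // MaxOccurEndsAt w i (padFalse v) k}
      = lastTimerCount w (i - k + w.length) * 2 ^ (i - (i - k + w.length)) := by
  set n := w.length with hnn
  set d := k - n with hdd
  have hdi : d ≤ i := by omega
  have him : i - d = i - k + n := by omega
  have key : ∀ v : Fin i → Bool,
      MaxOccurEndsAt w i (padFalse v) k ↔
        LastAtStart w (i - d) (padFalse (((splitEquiv d i hdi) v).2)) := by
    intro v
    have hsh := padFalse_shift hdi v
    constructor
    · rintro ⟨hocc, hmax⟩
      refine ⟨by omega, ?_, ?_⟩
      · rw [occurs_shift' le_rfl hsh, show d + n = k by omega]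
        exact hocc
      · intro k'' hk'' hocc''
        have hn'' : n ≤ k'' := hocc''.1
        rw [occurs_shift' hn'' hsh] at hocc''
        have := hmax (d + k'') (by omega) hocc''
        omega
    · rintro ⟨-, hocc, hlast⟩
      rw [occurs_shift' le_rfl hsh, show d + n = k by omega] at hocc
      refine ⟨hocc, ?_⟩
      intro k' hk' hocc'
      by_contra hgt
      push_neg at hgt
      have hn' : n ≤ k' := hocc'.1
      have hrw : k' = d + (k' - d) := by omega
      rw [hrw] at hocc'
      rw [← occurs_shift' (show n ≤ k' - d by omega) hsh] at hocc'
      have := hlast (k' - d) (by omega) hocc'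
      omega
  have e1 : {v : Fin i → Bool // MaxOccurEndsAt w i (padFalse v) k}
      ≃ {p : (Fin d → Bool) × (Fin (i - d) → Bool) // LastAtStart w (i - d) (padFalse p.2)} :=
    (splitEquiv d i hdi).subtypeEquiv fun v => by
      rw [key v]
  rw [Nat.card_congr (e1.trans (prodSubtypeSnd
      (fun v2 => LastAtStart w (i - d) (padFalse v2)))), Nat.card_prod, nat_card_fun_bool,
    him, lastTimerCount]
  have h2 : i - (i - k + n) = d := by omega
  rw [h2, mul_comm]

theorem card_max_piece_empty (w : List Bool) {k i : ℕ} (hn : k < w.length) :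
    Nat.card {v : Fin i → Bool // MaxOccurEndsAt w i (padFalse v) k} = 0 := by
  have : IsEmpty {v : Fin i → Bool // MaxOccurEndsAt w i (padFalse v) k} := by
    refine ⟨fun x => ?_⟩
    have := x.2.1.1
    omega
  exact @Nat.card_of_isEmpty _ this

theorem lastTimer_eq_zero (w : List Bool) {m : ℕ} (hm : m < w.length) :
    lastTimerCount w m = 0 := by
  have : IsEmpty {v : Fin m → Bool // LastAtStart w m (padFalse v)} := by
    refine ⟨fun x => ?_⟩
    have := x.2.1
    omega
  exact @Nat.card_of_isEmpty _ this

/-! ### The two sigma decompositions -/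

open scoped Classical in
noncomputable def firstSigmaEquiv (w : List Bool) (i : ℕ) :
    {v : Fin i → Bool // ∃ k ≤ i, OccursEndingAt w (padFalse v) k}
      ≃ (m : Fin (i + 1)) × {v : Fin i → Bool // FirstOccurEndsAt w (padFalse v) (m : ℕ)} where
  toFun x :=
    have hex : ∃ k, OccursEndingAt w (padFalse x.1) k := by
      obtain ⟨k, _, hk⟩ := x.2
      exact ⟨k, hk⟩
    ⟨⟨Nat.find hex, by
        obtain ⟨k, hki, hk⟩ := x.2
        have := Nat.find_min' hex hk
        omega⟩,
      x.1, Nat.find_spec hex, fun k hk => Nat.find_min hex hk⟩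
  invFun y := ⟨y.2.1, ⟨(y.1 : ℕ), Nat.lt_succ_iff.mp y.1.isLt, y.2.2.1⟩⟩
  left_inv x := rfl
  right_inv y := by
    obtain ⟨⟨m, hm⟩, v, hocc, hmin⟩ := y
    have hex : ∃ k, OccursEndingAt w (padFalse v) k := ⟨m, hocc⟩
    refine Sigma.subtype_ext (Fin.ext ?_) rfl
    simp only [Fin.val_mk]
    refine le_antisymm (Nat.find_min' hex hocc) ?_
    by_contra hlt
    push_neg at hlt
    exact hmin _ hlt (Nat.find_spec hex)

open scoped Classical in
noncomputable def lastSigmaEquiv (w : List Bool) (i : ℕ) :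
    {v : Fin i → Bool // ∃ k ≤ i, OccursEndingAt w (padFalse v) k}
      ≃ (k : Fin (i + 1)) × {v : Fin i → Bool // MaxOccurEndsAt w i (padFalse v) (k : ℕ)} where
  toFun x :=
    ⟨⟨Nat.findGreatest (fun k => OccursEndingAt w (padFalse x.1) k) i,
        Nat.lt_succ_of_le (Nat.findGreatest_le i)⟩,
      x.1, by
        obtain ⟨k, hki, hk⟩ := x.2
        exact Nat.findGreatest_spec hki hk,
      fun k' hk' hocc' => Nat.le_findGreatest hk' hocc'⟩
  invFun y := ⟨y.2.1, ⟨(y.1 : ℕ), Nat.lt_succ_iff.mp y.1.isLt, y.2.2.1⟩⟩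
  left_inv x := rfl
  right_inv y := by
    obtain ⟨⟨k, hk⟩, v, hocc, hmax⟩ := y
    refine Sigma.subtype_ext (Fin.ext ?_) rfl
    simp only [Fin.val_mk]
    refine le_antisymm ?_ (Nat.le_findGreatest (Nat.lt_succ_iff.mp hk) hocc)
    exact hmax _ (Nat.findGreatest_le i)
      (Nat.findGreatest_spec (Nat.lt_succ_iff.mp hk) hocc)

/-! ### The two sum formulas -/

theorem sum_first (w : List Bool) (i : ℕ) :
    Nat.card {v : Fin i → Bool // ∃ k ≤ i, OccursEndingAt w (padFalse v) k}
      = ∑ m ∈ range (i + 1), firstTimerCount w m * 2 ^ (i - m) := by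
  rw [Nat.card_congr (firstSigmaEquiv w i), nat_card_sigma,
    Fin.sum_univ_eq_sum_range (fun m => Nat.card
      {v : Fin i → Bool // FirstOccurEndsAt w (padFalse v) m})]
  exact Finset.sum_congr rfl fun m hm =>
    card_first_piece w (Nat.lt_succ_iff.mp (mem_range.mp hm))

theorem sum_last (w : List Bool) (i : ℕ) :
    Nat.card {v : Fin i → Bool // ∃ k ≤ i, OccursEndingAt w (padFalse v) k}
      = ∑ m ∈ range (i + 1), lastTimerCount w m * 2 ^ (i - m) := by
  rw [Nat.card_congr (lastSigmaEquiv w i), nat_card_sigma,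
    Fin.sum_univ_eq_sum_range (fun k => Nat.card
      {v : Fin i → Bool // MaxOccurEndsAt w i (padFalse v) k})]
  have step1 : ∑ k ∈ range (i + 1),
      Nat.card {v : Fin i → Bool // MaxOccurEndsAt w i (padFalse v) k}
      = ∑ k ∈ Ico w.length (i + 1),
          lastTimerCount w (i - k + w.length) * 2 ^ (i - (i - k + w.length)) := by
    rw [show Ico w.length (i + 1) = (range (i + 1)).filter (fun k => w.length ≤ k) by
      ext x
      simp only [mem_Ico, mem_filter, mem_range]
      omega]
    rw [Finset.sum_filter]
    refine Finset.sum_congr rfl fun k hk => ?_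
    have hki := Nat.lt_succ_iff.mp (mem_range.mp hk)
    by_cases h : w.length ≤ k
    · rw [if_pos h, card_max_piece w h hki]
    · rw [if_neg h, card_max_piece_empty w (by omega)]
  rw [step1]
  have step2 : ∑ m ∈ range (i + 1), lastTimerCount w m * 2 ^ (i - m)
      = ∑ m ∈ Ico w.length (i + 1), lastTimerCount w m * 2 ^ (i - m) := by
    by_cases hni : w.length ≤ i + 1
    · rw [Finset.range_eq_Ico, ← Finset.sum_Ico_consecutive _ (Nat.zero_le w.length) hni]
      have hz : ∑ m ∈ Ico 0 w.length, lastTimerCount w m * 2 ^ (i - m) = 0 := by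
        refine Finset.sum_eq_zero fun m hm => ?_
        rw [lastTimer_eq_zero w (by simpa using (mem_Ico.mp hm).2)]
        ring
      omega
    · push_neg at hni
      have h1 : Ico w.length (i + 1) = ∅ := Ico_eq_empty (by omega)
      rw [h1, Finset.sum_empty]
      refine Finset.sum_eq_zero fun m hm => ?_
      rw [lastTimer_eq_zero w (by have := mem_range.mp hm; omega)]
      ring
  rw [step2]
  refine Finset.sum_nbij' (fun k => i + w.length - k) (fun m => i + w.length - m)
    ?_ ?_ ?_ ?_ ?_
  · intro k hk
    have := mem_Ico.mp hk
    simp only [mem_Ico]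
    omega
  · intro m hm
    have := mem_Ico.mp hm
    simp only [mem_Ico]
    omega
  · intro k hk
    have := mem_Ico.mp hk
    show i + w.length - (i + w.length - k) = k
    omega
  · intro m hm
    have := mem_Ico.mp hm
    show i + w.length - (i + w.length - m) = m
    omega
  · intro k hk
    have := mem_Ico.mp hk
    show lastTimerCount w (i - k + w.length) * 2 ^ (i - (i - k + w.length))
      = lastTimerCount w (i + w.length - k) * 2 ^ (i - (i + w.length - k))
    have h1 : i - k + w.length = i + w.length - k := by omega
    rw [h1]

/-! ### First-timer counts equal last-timer counts -/

theorem first_eq_last (w : List Bool) : ∀ i, firstTimerCount w i = lastTimerCount w i := by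
  intro i
  induction i using Nat.strong_induction_on with
  | _ i ih =>
    have h1 := sum_first w i
    have h2 := sum_last w i
    rw [Finset.sum_range_succ] at h1 h2
    have hsum : ∑ m ∈ range i, firstTimerCount w m * 2 ^ (i - m)
        = ∑ m ∈ range i, lastTimerCount w m * 2 ^ (i - m) :=
      Finset.sum_congr rfl fun m hm => by rw [ih m (mem_range.mp hm)]
    rw [hsum] at h1
    simp only [Nat.sub_self, pow_zero, mul_one] at h1 h2
    omega

/-! ### Reversal -/

theorem occurs_rev_mp {w : List Bool} {m k : ℕ} (v : Fin m → Bool)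
    (h1 : w.length ≤ k) (h2 : k ≤ m)
    (h : OccursEndingAt w (padFalse v) k) :
    OccursEndingAt w.reverse (padFalse (fun x : Fin m => v x.rev)) (m - k + w.length) := by
  obtain ⟨-, hv⟩ := h
  have hlrev : w.reverse.length = w.length := List.length_reverse
  refine ⟨by omega, fun j => ?_⟩
  have hj : (j : ℕ) < w.length := by have := j.isLt; omega
  have hidx1 : m - k + w.length - w.reverse.length + (j : ℕ) = m - k + (j : ℕ) := by omega
  rw [hidx1]
  have hget : w.reverse.get j = w.get ⟨w.length - 1 - (j : ℕ), by omega⟩ := by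
    simp only [List.get_eq_getElem, List.getElem_reverse]
  rw [hget]
  have hlt : m - k + (j : ℕ) < m := by omega
  have hpad : padFalse (fun x : Fin m => v x.rev) (m - k + (j : ℕ))
      = v ((⟨m - k + (j : ℕ), hlt⟩ : Fin m).rev) := by
    simp only [padFalse, dif_pos hlt]
  rw [hpad]
  have hv' := hv ⟨w.length - 1 - (j : ℕ), by omega⟩
  have hidx2 : k - w.length + (w.length - 1 - (j : ℕ)) = k - 1 - (j : ℕ) := by omega
  rw [hidx2] at hv'
  have hlt2 : k - 1 - (j : ℕ) < m := by omega
  rw [show padFalse v (k - 1 - (j : ℕ)) = v ⟨k - 1 - (j : ℕ), hlt2⟩ from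
    by simp only [padFalse, dif_pos hlt2]] at hv'
  rw [← hv']
  congr 1
  ext
  simp only [Fin.rev, Fin.val_mk]
  omega

theorem occurs_rev_iff {w : List Bool} {m k : ℕ} (v : Fin m → Bool)
    (h1 : w.length ≤ k) (h2 : k ≤ m) :
    OccursEndingAt w (padFalse v) k ↔
      OccursEndingAt w.reverse (padFalse (fun x : Fin m => v x.rev)) (m - k + w.length) := by
  constructor
  · exact occurs_rev_mp v h1 h2
  · intro h
    have h' := occurs_rev_mp (w := w.reverse) (fun x : Fin m => v x.rev)
      (by simp only [List.length_reverse]; omega)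
      (by omega) h
    simp only [List.reverse_reverse, List.length_reverse, Fin.rev_rev] at h'
    have harith : m - (m - k + w.length) + w.length = k := by omega
    rw [harith] at h'
    exact h'

theorem first_iff_last {w : List Bool} {m : ℕ} (v : Fin m → Bool) :
    FirstOccurEndsAt w (padFalse v) m ↔
      LastAtStart w.reverse m (padFalse (fun x : Fin m => v x.rev)) := by
  constructor
  · rintro ⟨hocc, hmin⟩
    have hnm : w.length ≤ m := hocc.1
    refine ⟨by simpa using hnm, ?_, ?_⟩
    · have h := occurs_rev_mp v hnm le_rfl hocc
      rw [Nat.sub_self] at h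
      simpa using h
    · intro k hk hkocc
      by_contra hne
      have hnk : w.reverse.length ≤ k := hkocc.1
      rw [List.length_reverse] at hnk
      have h2 := occurs_rev_mp (w := w.reverse) (fun x : Fin m => v x.rev)
        (by simpa using hnk) hk hkocc
      simp only [List.reverse_reverse, List.length_reverse, Fin.rev_rev] at h2
      refine hmin (m - k + w.length) ?_ h2
      have : k ≠ w.length := by simpa using hne
      omega
  · rintro ⟨hnm, hocc, hmax⟩
    rw [List.length_reverse] at hnm
    constructor
    · have h := occurs_rev_mp (w := w.reverse) (fun x : Fin m => v x.rev)
        le_rfl (by simpa using hnm) hocc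
      simp only [List.reverse_reverse, List.length_reverse, Fin.rev_rev] at h
      rwa [show m - w.length + w.length = m by omega] at h
    · intro k hk hkocc
      have hnk : w.length ≤ k := hkocc.1
      have h := occurs_rev_mp v hnk (le_of_lt hk) hkocc
      have := hmax (m - k + w.length) (by omega) h
      rw [List.length_reverse] at this
      omega

theorem firstTimer_eq_lastTimer_rev (w : List Bool) (m : ℕ) :
    firstTimerCount w m = lastTimerCount w.reverse m := by
  refine Nat.card_congr (Equiv.subtypeEquiv (α := Fin m → Bool) ?_ ?_)
  · exact { toFun := fun v => fun x => v x.rev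
            invFun := fun v => fun x => v x.rev
            left_inv := fun v => by funext x; simp [Fin.rev_rev]
            right_inv := fun v => by funext x; simp [Fin.rev_rev] }
  · intro v
    exact first_iff_last v

theorem firstTimer_rev (w : List Bool) (m : ℕ) :
    firstTimerCount w.reverse m = firstTimerCount w m := by
  rw [firstTimer_eq_lastTimer_rev w.reverse m, List.reverse_reverse, ← first_eq_last]

end Aux

/-- Two binary strings that are reverses of each other have the same
autocorrelation polynomial, and hence the same expected wait time. -/
theorem autocorrPoly_reverse (w : List Bool) :
    (∀ z : ℝ, autocorrPoly w.reverse z = autocorrPoly w z) ∧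
      expectedWaitTime w.reverse = expectedWaitTime w := by
  constructor
  · intro z
    unfold autocorrPoly
    rw [List.length_reverse]
    refine Finset.sum_congr rfl fun i hi => ?_
    have hi' : i < w.length := Finset.mem_range.mp hi
    refine if_congr ?_ rfl rfl
    rw [List.drop_reverse, List.take_reverse,
      show w.length - (w.length - i) = i by omega, List.reverse_inj]
    exact eq_comm
  · unfold expectedWaitTime firstTimeProb
    refine tsum_congr fun i => ?_
    rw [firstTimer_rev]
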